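/- arXiv:math/0309383 — 3 statements merged into one kernel-verified Lean document; each statement's English description precedes it below -/
import Mathlib

section
/- Suppose (s_k), (a_k), and for each l ≥ 1 the sequences (a^l_k) are sequences of non-negative reals satisfying a_{k+1} ≤ a_k + s_k and a^l_{k+1} ≤ a^l_k + s_k for all k and l, with ∑_k s_k < ∞. If lim_k a_k = a, lim_k a^l_k = a^l for each l, and lim_l a^l_k = a_k for each fixed k, then limsup_l a^l ≤ a. -/
/-- Abstract semi-continuity lemma: if all sequences satisfy the uniform estimate
`x (k+1) ≤ x k + s k` with `∑ s k < ∞`, `a k → aLim`, `A l k → aL l` (in `k`) and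
`A l k → a k` (in `l`), then `limsup_l aL l ≤ aLim`. -/
theorem stmt1 (s a : ℕ → ℝ) (A : ℕ → ℕ → ℝ) (aLim : ℝ) (aL : ℕ → ℝ)
    (ha0 : ∀ k, 0 ≤ a k) (hs0 : ∀ k, 0 ≤ s k) (hA0 : ∀ l k, 0 ≤ A l k)
    (hrec : ∀ k, a (k + 1) ≤ a k + s k)
    (hrecA : ∀ l k, A l (k + 1) ≤ A l k + s k)
    (hsum : Summable s)
    (hconv : Filter.Tendsto a Filter.atTop (nhds aLim))
    (hconvA : ∀ l, Filter.Tendsto (A l) Filter.atTop (nhds (aL l)))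
    (hdiag : ∀ k, Filter.Tendsto (fun l => A l k) Filter.atTop (nhds (a k))) :
    Filter.limsup aL Filter.atTop ≤ aLim := by
  set T : ℕ → ℝ := fun k => ∑' j, s (j + k) with hT
  -- discrete Gronwall-type estimate
  have hstep : ∀ l k m, k ≤ m → A l m ≤ A l k + ∑ j ∈ Finset.Ico k m, s j := by
    intro l k m hkm
    induction m, hkm using Nat.le_induction with
    | base => simp
    | succ m hm ih =>
      calc A l (m + 1) ≤ A l m + s m := hrecA l m
        _ ≤ A l k + ∑ j ∈ Finset.Ico k m, s j + s m := by linarith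
        _ = A l k + ∑ j ∈ Finset.Ico k (m + 1), s j := by
            rw [Finset.sum_Ico_succ_top hm]; ring
  have hsumtail : ∀ k, Summable fun j => s (j + k) := fun k =>
    (summable_nat_add_iff k).2 hsum
  have hsumle : ∀ k m, ∑ j ∈ Finset.Ico k m, s j ≤ T k := by
    intro k m
    rw [Finset.sum_Ico_eq_sum_range]
    have := Summable.sum_le_tsum (Finset.range (m - k))
      (fun i _ => hs0 (i + k)) (hsumtail k)
    simpa [T, add_comm] using this
  -- pass to the limit in m
  have h1 : ∀ k l, aL l ≤ A l k + T k := by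
    intro k l
    refine le_of_tendsto (hconvA l) ?_
    filter_upwards [Filter.eventually_ge_atTop k] with m hm
    exact (hstep l k m hm).trans (by linarith [hsumle k m])
  -- pass to the limit in l
  have h2 : ∀ k, Filter.limsup aL Filter.atTop ≤ a k + T k := by
    intro k
    have htend : Filter.Tendsto (fun l => A l k + T k) Filter.atTop
        (nhds (a k + T k)) := (hdiag k).add tendsto_const_nhds
    have hb : Filter.IsBoundedUnder (· ≤ ·) Filter.atTop (fun l => A l k + T k) :=
      htend.isBoundedUnder_le
    have hcb : Filter.IsCoboundedUnder (· ≤ ·) Filter.atTop aL := by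
      refine Filter.IsBoundedUnder.isCoboundedUnder_le
        (Filter.isBoundedUnder_of ⟨0, fun l' =>
          ge_of_tendsto' (hconvA l') fun k' => hA0 l' k'⟩)
    calc Filter.limsup aL Filter.atTop
        ≤ Filter.limsup (fun l => A l k + T k) Filter.atTop :=
          Filter.limsup_le_limsup (Filter.Eventually.of_forall (h1 k)) hcb hb
      _ = a k + T k := htend.limsup_eq
  -- pass to the limit in k
  have hTzero : Filter.Tendsto T Filter.atTop (nhds 0) := by
    have hpart : Filter.Tendsto (fun k => ∑ i ∈ Finset.range k, s i)
        Filter.atTop (nhds (∑' i, s i)) := hsum.hasSum.tendsto_sum_nat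
    have : Filter.Tendsto (fun k => (∑' i, s i) - ∑ i ∈ Finset.range k, s i)
        Filter.atTop (nhds ((∑' i, s i) - (∑' i, s i))) :=
      tendsto_const_nhds.sub hpart
    rw [sub_self] at this
    refine this.congr fun k => ?_
    have := Summable.sum_add_tsum_nat_add k hsum
    simp only [hT]
    linarith [Summable.sum_add_tsum_nat_add k hsum]
  have hfin : Filter.Tendsto (fun k => a k + T k) Filter.atTop
      (nhds (aLim + 0)) := hconv.add hTzero
  have := ge_of_tendsto' hfin h2
  linarith
end

section
/- Let A = (A_1, …, A_n) be a row contraction (n ≥ 2) with Φ(X) = ∑ A_i X A_i*, and suppose tr(I − Φ(I)) < ∞. Then the limit lim_{k→∞} tr(I − Φ^k(I))/n^k exists. -/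
open ContinuousLinearMap in
/-- The completely positive map `Φ(X) = ∑ Aᵢ X Aᵢ*` associated to a tuple of operators. -/
noncomputable def Phi {H : Type*} [NormedAddCommGroup H] [InnerProductSpace ℂ H]
    [CompleteSpace H] {n : ℕ} (A : Fin n → H →L[ℂ] H) (X : H →L[ℂ] H) : H →L[ℂ] H :=
  ∑ i, A i ∘L X ∘L adjoint (A i)

namespace Stmt7Aux

open ContinuousLinearMap Filter
open scoped InnerProductSpace ENNReal NNReal

variable {H : Type*} [NormedAddCommGroup H] [InnerProductSpace ℂ H] [CompleteSpace H]
variable {n : ℕ}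

lemma phi_sub (A : Fin n → H →L[ℂ] H) (X Y : H →L[ℂ] H) :
    Phi A (X - Y) = Phi A X - Phi A Y := by
  simp [Phi, comp_sub, sub_comp, Finset.sum_sub_distrib]

lemma iter_sub (A : Fin n → H →L[ℂ] H) (k : ℕ) (X Y : H →L[ℂ] H) :
    (Phi A)^[k] (X - Y) = (Phi A)^[k] X - (Phi A)^[k] Y := by
  induction k generalizing X Y with
  | zero => simp
  | succ k ih =>
      simp only [Function.iterate_succ_apply]
      rw [phi_sub, ih]

lemma phi_pos (A : Fin n → H →L[ℂ] H) {X : H →L[ℂ] H} (hX : X.IsPositive) :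
    (Phi A X).IsPositive := by
  unfold Phi
  exact Finset.sum_induction _ ContinuousLinearMap.IsPositive
    (fun a b ha hb => ha.add hb) isPositive_zero (fun i _ => hX.conj_adjoint (A i))

lemma iter_pos (A : Fin n → H →L[ℂ] H) {X : H →L[ℂ] H} (hX : X.IsPositive) (j : ℕ) :
    ((Phi A)^[j] X).IsPositive := by
  induction j with
  | zero => simpa using hX
  | succ j ih => rw [Function.iterate_succ_apply']; exact phi_pos A ih

lemma one_sub_iter (A : Fin n → H →L[ℂ] H) (k : ℕ) :
    (1 : H →L[ℂ] H) - (Phi A)^[k] 1 =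
      ∑ j ∈ Finset.range k, (Phi A)^[j] (1 - Phi A 1) := by
  induction k with
  | zero => simp
  | succ k ih =>
      rw [Finset.sum_range_succ, ← ih]
      have : (Phi A)^[k+1] (1 : H →L[ℂ] H) = (Phi A)^[k] (Phi A 1) :=
        Function.iterate_succ_apply (Phi A) k 1
      rw [this, iter_sub]
      abel

section Basis

variable {ι : Type*} (b : HilbertBasis ι ℂ H)

lemma re_inner_self (x : H) : (⟪x, x⟫_ℂ).re = ‖x‖ ^ 2 :=
  inner_self_eq_norm_sq (𝕜 := ℂ) x

lemma inner_re_nonneg {X : H →L[ℂ] H} (hX : X.IsPositive) (x : H) :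
    0 ≤ (⟪X x, x⟫_ℂ).re := (Complex.nonneg_iff.mp (hX.inner_nonneg_left x)).1

lemma parseval (x : H) : HasSum (fun i => ‖(⟪b i, x⟫_ℂ)‖ ^ 2) (‖x‖ ^ 2) := by
  have h := (b.hasSum_inner_mul_inner x x).mapL Complex.reCLM
  have h1 : Complex.reCLM (⟪x, x⟫_ℂ) = ‖x‖ ^ 2 := re_inner_self x
  rw [h1] at h
  have h2 : (fun i => Complex.reCLM (⟪x, b i⟫_ℂ * ⟪b i, x⟫_ℂ))
      = fun i => ‖(⟪b i, x⟫_ℂ)‖ ^ 2 := by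
    funext i
    rw [Complex.reCLM_apply, ← inner_conj_symm, ← Complex.normSq_eq_conj_mul_self,
      Complex.ofReal_re, Complex.sq_norm]
  rw [h2] at h
  exact h

lemma eparseval (x : H) :
    ∑' i, ENNReal.ofReal (‖(⟪b i, x⟫_ℂ)‖ ^ 2) = ENNReal.ofReal (‖x‖ ^ 2) := by
  rw [← ENNReal.ofReal_tsum_of_nonneg (fun i => sq_nonneg _) (parseval b x).summable,
    (parseval b x).tsum_eq]

lemma eswap (T : H →L[ℂ] H) :
    ∑' i, ENNReal.ofReal (‖T (b i)‖ ^ 2) = ∑' j, ENNReal.ofReal (‖(adjoint T) (b j)‖ ^ 2) := by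
  calc ∑' i, ENNReal.ofReal (‖T (b i)‖ ^ 2)
      = ∑' i, ∑' j, ENNReal.ofReal (‖(⟪b j, T (b i)⟫_ℂ)‖ ^ 2) :=
        tsum_congr fun i => (eparseval b _).symm
    _ = ∑' j, ∑' i, ENNReal.ofReal (‖(⟪b j, T (b i)⟫_ℂ)‖ ^ 2) := ENNReal.tsum_comm
    _ = ∑' j, ENNReal.ofReal (‖(adjoint T) (b j)‖ ^ 2) := by
        refine tsum_congr fun j => ?_
        rw [← eparseval b (adjoint T (b j))]
        refine tsum_congr fun i => ?_
        congr 2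
        rw [norm_inner_symm, ContinuousLinearMap.adjoint_inner_right, norm_inner_symm]

/-- The (possibly infinite) trace of an operator along the basis `b`. -/
noncomputable def etr (X : H →L[ℂ] H) : ℝ≥0∞ :=
  ∑' i, ENNReal.ofReal ((⟪X (b i), b i⟫_ℂ).re)

lemma etr_def (X : H →L[ℂ] H) :
    etr b X = ∑' i, ENNReal.ofReal ((⟪X (b i), b i⟫_ℂ).re) := rfl

lemma re_inner_sqrt {S X : H →L[ℂ] H} (hS : IsSelfAdjoint S) (hSX : S * S = X) (x : H) :
    (⟪X x, x⟫_ℂ).re = ‖S x‖ ^ 2 := by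
  rw [← hSX]
  have : (S * S) x = (adjoint S) (S x) := by
    rw [hS.adjoint_eq]; rfl
  rw [this, ContinuousLinearMap.adjoint_inner_left]
  exact re_inner_self (S x)

lemma exists_sqrt {X : H →L[ℂ] H} (hX : X.IsPositive) :
    ∃ S : H →L[ℂ] H, IsSelfAdjoint S ∧ S * S = X :=
  ⟨CFC.sqrt X, IsSelfAdjoint.of_nonneg (CFC.sqrt_nonneg X),
    CFC.sqrt_mul_sqrt_self X ((nonneg_iff_isPositive X).mpr hX)⟩

lemma etr_eq_sqrt {S X : H →L[ℂ] H} (hS : IsSelfAdjoint S) (hSX : S * S = X) :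
    etr b X = ∑' i, ENNReal.ofReal (‖S (b i)‖ ^ 2) := by
  rw [etr_def]
  exact tsum_congr fun i => by rw [re_inner_sqrt hS hSX]

lemma key (A : Fin n → H →L[ℂ] H) (hA' : ∀ l (x : H), ‖A l x‖ ≤ ‖x‖)
    {X : H →L[ℂ] H} (hX : X.IsPositive) :
    etr b (Phi A X) ≤ n * etr b X := by
  obtain ⟨S, hS, hSX⟩ := exists_sqrt hX
  have hpt : ∀ e : H, (⟪(Phi A X) e, e⟫_ℂ).re
      = ∑ l, ‖S ((adjoint (A l)) e)‖ ^ 2 := by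
    intro e
    have : (Phi A X) e = ∑ l, (A l) (X ((adjoint (A l)) e)) := by
      simp [Phi, ContinuousLinearMap.sum_apply]
    rw [this, sum_inner, Complex.re_sum]
    refine Finset.sum_congr rfl fun l _ => ?_
    rw [← ContinuousLinearMap.adjoint_inner_right, re_inner_sqrt hS hSX]
  have h2 : etr b (Phi A X)
      = ∑ l, ∑' i, ENNReal.ofReal (‖S ((adjoint (A l)) (b i))‖ ^ 2) := by
    rw [etr_def]
    rw [← Summable.tsum_finsetSum (fun l _ => ENNReal.summable)]
    refine tsum_congr fun i => ?_
    rw [hpt (b i), ENNReal.ofReal_sum_of_nonneg (fun l _ => sq_nonneg _)]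
  rw [h2]
  have h3 : ∀ l : Fin n,
      ∑' i, ENNReal.ofReal (‖S ((adjoint (A l)) (b i))‖ ^ 2) ≤ etr b X := by
    intro l
    have heq : ∑' i, ENNReal.ofReal (‖S ((adjoint (A l)) (b i))‖ ^ 2)
        = ∑' i, ENNReal.ofReal (‖(A l) (S (b i))‖ ^ 2) := by
      have h4 := eswap b (S ∘L adjoint (A l))
      have h5 : adjoint (S ∘L adjoint (A l)) = A l ∘L S := by
        rw [ContinuousLinearMap.adjoint_comp, ContinuousLinearMap.adjoint_adjoint,
          hS.adjoint_eq]
      rw [h5] at h4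
      simpa using h4
    rw [heq, etr_eq_sqrt b hS hSX]
    refine ENNReal.tsum_le_tsum fun i => ENNReal.ofReal_le_ofReal ?_
    have := hA' l (S (b i))
    have h0 : (0:ℝ) ≤ ‖S (b i)‖ := norm_nonneg _
    nlinarith [norm_nonneg ((A l) (S (b i)))]
  calc ∑ l, ∑' i, ENNReal.ofReal (‖S ((adjoint (A l)) (b i))‖ ^ 2)
      ≤ ∑ _l : Fin n, etr b X := Finset.sum_le_sum fun l _ => h3 l
    _ = n * etr b X := by
        rw [Finset.sum_const, Finset.card_univ, Fintype.card_fin, nsmul_eq_mul]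

lemma summable_of_etr_ne_top {X : H →L[ℂ] H} (hX : X.IsPositive) (h : etr b X ≠ ⊤) :
    Summable (fun i => (⟪X (b i), b i⟫_ℂ).re) ∧
      ∑' i, (⟪X (b i), b i⟫_ℂ).re = (etr b X).toReal := by
  have hf0 : ∀ i, 0 ≤ (⟪X (b i), b i⟫_ℂ).re := fun i => inner_re_nonneg hX (b i)
  have h' : (∑' i, (((⟪X (b i), b i⟫_ℂ).re).toNNReal : ℝ≥0∞)) ≠ ⊤ := by
    rw [etr_def] at h
    exact h
  have hsum : Summable (fun i => ((⟪X (b i), b i⟫_ℂ).re).toNNReal) :=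
    ENNReal.tsum_coe_ne_top_iff_summable.mp h'
  have hsf : Summable (fun i => (⟪X (b i), b i⟫_ℂ).re) :=
    (NNReal.summable_coe.mpr hsum).congr (fun i => Real.coe_toNNReal _ (hf0 i))
  refine ⟨hsf, ?_⟩
  rw [etr_def, ENNReal.tsum_toReal_eq (fun i => ENNReal.ofReal_ne_top)]
  exact tsum_congr fun i => (ENNReal.toReal_ofReal (hf0 i)).symm

lemma etr_eq_ofReal_of_summable {X : H →L[ℂ] H} (hX : X.IsPositive)
    (h : Summable (fun i => (⟪X (b i), b i⟫_ℂ).re)) :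
    etr b X = ENNReal.ofReal (∑' i, (⟪X (b i), b i⟫_ℂ).re) := by
  rw [etr_def, ← ENNReal.ofReal_tsum_of_nonneg (fun i => inner_re_nonneg hX (b i)) h]

end Basis

lemma limit_aux (hn : 2 ≤ n) (r : ℕ → ℝ) (hr0 : ∀ j, 0 ≤ r j)
    (hrec : ∀ j, r (j + 1) ≤ n * r j) :
    ∃ l : ℝ, Tendsto (fun k : ℕ => (∑ j ∈ Finset.range k, r j) / (n : ℝ) ^ k)
      atTop (nhds l) := by
  have hn0 : (0:ℝ) < n := by
    have : (2:ℝ) ≤ n := by exact_mod_cast hn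
    linarith
  set c : ℝ := 1 / n with hcdef
  have hc0 : 0 < c := by rw [hcdef]; exact div_pos one_pos hn0
  have hc1 : c < 1 := by
    rw [hcdef, div_lt_one hn0]
    have : (2:ℝ) ≤ n := by exact_mod_cast hn
    linarith
  set bb : ℕ → ℝ := fun j => r j / (n : ℝ) ^ j with hbb
  have hbb0 : ∀ j, 0 ≤ bb j := fun j => div_nonneg (hr0 j) (by positivity)
  have hanti : Antitone bb := by
    apply antitone_nat_of_succ_le
    intro j
    have h1 : r (j+1) / (n:ℝ) ^ (j+1) ≤ ((n:ℝ) * r j) / (n:ℝ) ^ (j+1) := by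
      gcongr
      exact hrec j
    have h2 : ((n:ℝ) * r j) / (n:ℝ) ^ (j+1) = r j / (n:ℝ) ^ j := by
      rw [pow_succ']
      exact mul_div_mul_left _ _ (ne_of_gt hn0)
    simpa [hbb, h2] using h1
  have hbdd : BddBelow (Set.range bb) := ⟨0, by rintro x ⟨j, rfl⟩; exact hbb0 j⟩
  have hL : Tendsto bb atTop (nhds (⨅ j, bb j)) := tendsto_atTop_ciInf hanti hbdd
  set L : ℝ := ⨅ j, bb j with hLdef
  set G : ℕ → ℕ → ℝ := fun k m => if m < k then bb (k - 1 - m) * c ^ (m + 1) else 0 with hG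
  have hseq : ∀ k, (∑ j ∈ Finset.range k, r j) / (n : ℝ) ^ k = ∑' m, G k m := by
    intro k
    rw [tsum_eq_sum (s := Finset.range k)
      (fun m hm => by simp only [hG]; rw [if_neg (by simpa using hm)]), Finset.sum_div]
    have e1 : ∑ m ∈ Finset.range k, G k m
        = ∑ m ∈ Finset.range k, bb (k - 1 - m) * c ^ (k - (k - 1 - m)) := by
      refine Finset.sum_congr rfl fun m hm => ?_
      have hmk : m < k := Finset.mem_range.mp hm
      simp only [hG]
      rw [if_pos hmk]
      congr 2
      omega
    rw [e1, Finset.sum_range_reflect (fun j => bb j * c ^ (k - j)) k]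
    rw [eq_comm]
    refine Finset.sum_congr rfl fun j hj => ?_
    have hjk : j < k := Finset.mem_range.mp hj
    have hbj : bb j = r j / (n : ℝ) ^ j := rfl
    have hc : c = 1 / (n : ℝ) := rfl
    rw [hbj, hc, div_pow, one_pow, div_mul_div_comm, mul_one, ← pow_add]
    congr 2
    omega
  have hptwise : ∀ m : ℕ, Tendsto (fun k => G k m) atTop (nhds (L * c ^ (m + 1))) := by
    intro m
    have h1 : Tendsto (fun k => bb (k - 1 - m)) atTop (nhds L) := by
      have hfe : (fun k : ℕ => bb (k - 1 - m)) = bb ∘ (fun k => k - (1 + m)) := by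
        funext k; simp [Nat.sub_sub]
      rw [hfe]
      exact hL.comp (tendsto_sub_atTop_nat (1 + m))
    have h2 := h1.mul_const (c ^ (m + 1))
    apply h2.congr'
    filter_upwards [eventually_gt_atTop m] with k hk
    simp only [hG]
    rw [if_pos hk]
  have hbound : ∀ᶠ k in atTop, ∀ m, ‖G k m‖ ≤ bb 0 * c ^ (m + 1) := by
    filter_upwards with k
    intro m
    simp only [hG]
    split
    · rw [Real.norm_eq_abs,
        abs_of_nonneg (mul_nonneg (hbb0 _) (pow_nonneg hc0.le _))]
      exact mul_le_mul_of_nonneg_right (hanti (Nat.zero_le (k - 1 - m)))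
        (pow_nonneg hc0.le _)
    · simp only [norm_zero]
      exact mul_nonneg (hbb0 0) (pow_nonneg hc0.le _)
  have hsumbound : Summable (fun m : ℕ => bb 0 * c ^ (m + 1)) := by
    have : (fun m : ℕ => bb 0 * c ^ (m + 1)) = fun m => (bb 0 * c) * c ^ m := by
      funext m; ring
    rw [this]
    exact (summable_geometric_of_lt_one hc0.le hc1).mul_left _
  refine ⟨∑' m, L * c ^ (m + 1), ?_⟩
  have := tendsto_tsum_of_dominated_convergence hsumbound hptwise hbound
  apply this.congr
  intro k
  exact (hseq k).symm

end Stmt7Aux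

open Stmt7Aux ContinuousLinearMap Filter in
open scoped InnerProductSpace in
/-- For a row contraction (`n ≥ 2`) with `I − Φ(I)` of finite trace, the limit
`lim_k tr(I − Φ^k(I)) / n^k` exists, the trace being computed against a Hilbert basis. -/
theorem stmt7 {H : Type*} [NormedAddCommGroup H] [InnerProductSpace ℂ H] [CompleteSpace H]
    {n : ℕ} (hn : 2 ≤ n) (A : Fin n → H →L[ℂ] H)
    (hA : (1 - Phi A 1).IsPositive)
    {ι : Type*} (b : HilbertBasis ι ℂ H)
    (htc : Summable fun i => (⟪(1 - Phi A 1) (b i), b i⟫_ℂ).re) :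
    ∃ l : ℝ, Filter.Tendsto
      (fun k : ℕ => (∑' i, (⟪(1 - (Phi A)^[k] 1) (b i), b i⟫_ℂ).re) / (n : ℝ) ^ k)
      Filter.atTop (nhds l) := by
  classical
  -- contraction property of each A l
  have hA' : ∀ l (x : H), ‖A l x‖ ≤ ‖x‖ := by
    have hadj : ∀ l (x : H), ‖adjoint (A l) x‖ ≤ ‖x‖ := by
      intro l x
      have h1 : 0 ≤ (⟪(1 - Phi A 1) x, x⟫_ℂ).re := Stmt7Aux.inner_re_nonneg hA x
      have h2 : (⟪(1 - Phi A 1) x, x⟫_ℂ).re = ‖x‖ ^ 2 - ∑ i, ‖adjoint (A i) x‖ ^ 2 := by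
        have e1 : (1 - Phi A 1) x = x - ∑ i, (A i) ((adjoint (A i)) x) := by
          simp [Phi, ContinuousLinearMap.sum_apply, ContinuousLinearMap.sub_apply,
            ContinuousLinearMap.comp_apply, ContinuousLinearMap.one_apply]
        rw [e1, inner_sub_left, Complex.sub_re, Stmt7Aux.re_inner_self x, sum_inner,
          Complex.re_sum]
        congr 1
        refine Finset.sum_congr rfl fun i _ => ?_
        rw [← ContinuousLinearMap.adjoint_inner_right]
        exact Stmt7Aux.re_inner_self _
      rw [h2] at h1
      have h3 : ‖adjoint (A l) x‖ ^ 2 ≤ ∑ i, ‖adjoint (A i) x‖ ^ 2 :=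
        Finset.single_le_sum (f := fun i => ‖adjoint (A i) x‖ ^ 2)
          (fun i _ => sq_nonneg _) (Finset.mem_univ l)
      nlinarith [norm_nonneg (adjoint (A l) x), norm_nonneg x]
    intro l x
    have hno : ‖A l‖ ≤ 1 := by
      have hmap := LinearIsometryEquiv.norm_map
        (ContinuousLinearMap.adjoint : (H →L[ℂ] H) ≃ₗᵢ⋆[ℂ] (H →L[ℂ] H)) (A l)
      rw [← hmap]
      exact ContinuousLinearMap.opNorm_le_bound _ zero_le_one
        (fun y => by rw [one_mul]; exact hadj l y)
    calc ‖A l x‖ ≤ ‖A l‖ * ‖x‖ := (A l).le_opNorm x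
      _ ≤ 1 * ‖x‖ := mul_le_mul_of_nonneg_right hno (norm_nonneg x)
      _ = ‖x‖ := one_mul _
  set D : H →L[ℂ] H := 1 - Phi A 1 with hD
  have hpos : ∀ j, ((Phi A)^[j] D).IsPositive := fun j => iter_pos A hA j
  -- finiteness of traces by induction
  have hfin : ∀ j, etr b ((Phi A)^[j] D) ≠ ⊤ := by
    intro j
    induction j with
    | zero =>
        simp only [Function.iterate_zero, id_eq]
        rw [etr_eq_ofReal_of_summable b hA htc]
        exact ENNReal.ofReal_ne_top
    | succ j ih =>
        rw [Function.iterate_succ_apply']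
        have h1 := key b A hA' (hpos j)
        intro htop
        rw [htop] at h1
        have := h1.trans_lt (ENNReal.mul_lt_top (ENNReal.natCast_lt_top n) (lt_top_iff_ne_top.mpr ih))
        exact (lt_irrefl _ (this.trans_le le_top)).elim
  set r : ℕ → ℝ := fun j => (etr b ((Phi A)^[j] D)).toReal with hr
  have hrtsum : ∀ j, Summable (fun i => (⟪((Phi A)^[j] D) (b i), b i⟫_ℂ).re) ∧
      ∑' i, (⟪((Phi A)^[j] D) (b i), b i⟫_ℂ).re = r j :=
    fun j => summable_of_etr_ne_top b (hpos j) (hfin j)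
  have hr0 : ∀ j, 0 ≤ r j := fun j => ENNReal.toReal_nonneg
  have hrec : ∀ j, r (j + 1) ≤ n * r j := by
    intro j
    have h1 : etr b ((Phi A)^[j+1] D) ≤ n * etr b ((Phi A)^[j] D) := by
      rw [Function.iterate_succ_apply']
      exact key b A hA' (hpos j)
    have h2 : ((n : ENNReal) * etr b ((Phi A)^[j] D)) ≠ ⊤ :=
      ENNReal.mul_ne_top (ENNReal.natCast_ne_top n) (hfin j)
    have h3 := ENNReal.toReal_mono h2 h1
    rwa [ENNReal.toReal_mul, ENNReal.toReal_natCast] at h3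
  obtain ⟨l, hl⟩ := limit_aux hn r hr0 hrec
  refine ⟨l, ?_⟩
  apply hl.congr
  intro k
  congr 1
  -- ∑_{j<k} r j = ∑' i, re ⟪(1 - Φ^k 1) b i, b i⟫
  have hop : (1 : H →L[ℂ] H) - (Phi A)^[k] 1 = ∑ j ∈ Finset.range k, (Phi A)^[j] D :=
    one_sub_iter A k
  have hterm : ∀ i : ι, (⟪(1 - (Phi A)^[k] 1) (b i), b i⟫_ℂ).re
      = ∑ j ∈ Finset.range k, (⟪((Phi A)^[j] D) (b i), b i⟫_ℂ).re := by
    intro i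
    rw [hop]
    rw [ContinuousLinearMap.sum_apply, sum_inner, Complex.re_sum]
  rw [eq_comm]
  calc ∑' i, (⟪(1 - (Phi A)^[k] 1) (b i), b i⟫_ℂ).re
      = ∑' i, ∑ j ∈ Finset.range k, (⟪((Phi A)^[j] D) (b i), b i⟫_ℂ).re :=
        tsum_congr hterm
    _ = ∑ j ∈ Finset.range k, ∑' i, (⟪((Phi A)^[j] D) (b i), b i⟫_ℂ).re :=
        Summable.tsum_finsetSum (fun j _ => (hrtsum j).1)
    _ = ∑ j ∈ Finset.range k, r j := Finset.sum_congr rfl fun j _ => (hrtsum j).2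
end

section
/- Let A = (A_1, …, A_n) be a row contraction (n ≥ 2) with Φ(X) = ∑ A_i X A_i*, and suppose rank(I − Φ(I)) < ∞. Then the limit lim_{k→∞} rank(I − Φ^k(I))/n^k exists. -/
section Aux

open ContinuousLinearMap Module Submodule

set_option linter.unusedSectionVars false

variable {H : Type*} [NormedAddCommGroup H] [InnerProductSpace ℂ H] [CompleteSpace H]

/-- rank of a sum of operators -/
lemma rank_add_le' (f g : H →L[ℂ] H)
    (hf : FiniteDimensional ℂ (LinearMap.range ((f : H →L[ℂ] H) : H →ₗ[ℂ] H))) (hg : FiniteDimensional ℂ (LinearMap.range ((g : H →L[ℂ] H) : H →ₗ[ℂ] H))) :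
    FiniteDimensional ℂ (LinearMap.range ((f + g : H →L[ℂ] H) : H →ₗ[ℂ] H)) ∧
      finrank ℂ (LinearMap.range ((f + g : H →L[ℂ] H) : H →ₗ[ℂ] H)) ≤
        finrank ℂ (LinearMap.range ((f : H →L[ℂ] H) : H →ₗ[ℂ] H)) + finrank ℂ (LinearMap.range ((g : H →L[ℂ] H) : H →ₗ[ℂ] H)) := by
  have hle : LinearMap.range ((f + g : H →L[ℂ] H) : H →ₗ[ℂ] H) ≤ LinearMap.range ((f : H →L[ℂ] H) : H →ₗ[ℂ] H) ⊔ LinearMap.range ((g : H →L[ℂ] H) : H →ₗ[ℂ] H) := by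
    rintro x ⟨y, rfl⟩
    exact Submodule.mem_sup.2 ⟨f y, ⟨y, rfl⟩, g y, ⟨y, rfl⟩, rfl⟩
  haveI := hf; haveI := hg
  haveI : FiniteDimensional ℂ ↥(LinearMap.range ((f : H →L[ℂ] H) : H →ₗ[ℂ] H) ⊔ LinearMap.range ((g : H →L[ℂ] H) : H →ₗ[ℂ] H)) :=
    Submodule.finiteDimensional_sup _ _
  refine ⟨Submodule.finiteDimensional_of_le hle, ?_⟩
  exact (Submodule.finrank_mono hle).trans
    (Submodule.finrank_add_le_finrank_add_finrank _ _)

/-- rank of `a ∘ f ∘ b` is at most rank of `f` -/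
lemma rank_comp_le' (a b f : H →L[ℂ] H) (hf : FiniteDimensional ℂ (LinearMap.range ((f : H →L[ℂ] H) : H →ₗ[ℂ] H))) :
    FiniteDimensional ℂ (LinearMap.range ((a ∘L f ∘L b : H →L[ℂ] H) : H →ₗ[ℂ] H)) ∧
      finrank ℂ (LinearMap.range ((a ∘L f ∘L b : H →L[ℂ] H) : H →ₗ[ℂ] H)) ≤ finrank ℂ (LinearMap.range ((f : H →L[ℂ] H) : H →ₗ[ℂ] H)) := by
  haveI := hf
  have h1 : LinearMap.range ((f ∘L b : H →L[ℂ] H) : H →ₗ[ℂ] H) ≤ LinearMap.range ((f : H →L[ℂ] H) : H →ₗ[ℂ] H) := by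
    rintro x ⟨y, rfl⟩; exact ⟨b y, rfl⟩
  haveI : FiniteDimensional ℂ ↥(LinearMap.range ((f ∘L b : H →L[ℂ] H) : H →ₗ[ℂ] H)) :=
    Submodule.finiteDimensional_of_le h1
  have h2 : LinearMap.range ((a ∘L f ∘L b : H →L[ℂ] H) : H →ₗ[ℂ] H) =
      Submodule.map (a : H →ₗ[ℂ] H) (LinearMap.range ((f ∘L b : H →L[ℂ] H) : H →ₗ[ℂ] H)) := by
    apply le_antisymm
    · rintro x ⟨y, rfl⟩; exact ⟨f (b y), ⟨y, rfl⟩, rfl⟩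
    · rintro x ⟨z, ⟨y, rfl⟩, rfl⟩; exact ⟨y, rfl⟩
  rw [h2]
  constructor
  · exact Module.Finite.map _ _
  · exact (Submodule.finrank_map_le _ _).trans (Submodule.finrank_mono h1)

lemma rank_sum_le' {ι : Type*} (s : Finset ι) (f : ι → H →L[ℂ] H) (r : ℕ)
    (h : ∀ i ∈ s, FiniteDimensional ℂ (LinearMap.range ((f i : H →L[ℂ] H) : H →ₗ[ℂ] H)) ∧
        finrank ℂ (LinearMap.range ((f i : H →L[ℂ] H) : H →ₗ[ℂ] H)) ≤ r) :
    FiniteDimensional ℂ (LinearMap.range ((∑ i ∈ s, f i : H →L[ℂ] H) : H →ₗ[ℂ] H)) ∧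
      finrank ℂ (LinearMap.range ((∑ i ∈ s, f i : H →L[ℂ] H) : H →ₗ[ℂ] H)) ≤ s.card * r := by
  classical
  induction s using Finset.induction_on with
  | empty =>
      rw [Finset.sum_empty, Finset.card_empty, zero_mul]
      have : LinearMap.range ((0 : H →L[ℂ] H) : H →ₗ[ℂ] H) = ⊥ := LinearMap.range_eq_bot.2 rfl
      rw [this]
      exact ⟨inferInstance, by simp⟩
  | @insert a s' hi ih =>
      have hih := ih (fun i his => h i (Finset.mem_insert_of_mem his))
      have ha := h a (Finset.mem_insert_self _ _)
      rw [Finset.sum_insert hi]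
      obtain ⟨h1, h2⟩ := rank_add_le' (f a) (∑ i ∈ s', f i) ha.1 hih.1
      refine ⟨h1, h2.trans ?_⟩
      rw [Finset.card_insert_of_notMem hi, add_mul, one_mul, add_comm (s'.card * r)]
      exact Nat.add_le_add ha.2 hih.2

lemma rank_Phi_le {n : ℕ} (A : Fin n → H →L[ℂ] H) (X : H →L[ℂ] H)
    (hX : FiniteDimensional ℂ (LinearMap.range ((X : H →L[ℂ] H) : H →ₗ[ℂ] H))) :
    FiniteDimensional ℂ (LinearMap.range ((Phi A X : H →L[ℂ] H) : H →ₗ[ℂ] H)) ∧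
      finrank ℂ (LinearMap.range ((Phi A X : H →L[ℂ] H) : H →ₗ[ℂ] H)) ≤ n * finrank ℂ (LinearMap.range ((X : H →L[ℂ] H) : H →ₗ[ℂ] H)) := by
  have := rank_sum_le' Finset.univ (fun i => A i ∘L X ∘L adjoint (A i))
    (finrank ℂ (LinearMap.range ((X : H →L[ℂ] H) : H →ₗ[ℂ] H))) (fun i _ => rank_comp_le' (A i) (adjoint (A i)) X hX)
  rw [Finset.card_univ, Fintype.card_fin] at this
  exact this

lemma Phi_sub' {n : ℕ} (A : Fin n → H →L[ℂ] H) (X Y : H →L[ℂ] H) :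
    Phi A (X - Y) = Phi A X - Phi A Y := by
  simp [Phi, comp_sub, sub_comp, Finset.sum_sub_distrib]

lemma key_decomp {n : ℕ} (A : Fin n → H →L[ℂ] H) (k : ℕ) :
    1 - (Phi A)^[k + 1] 1 = (1 - Phi A 1) + Phi A (1 - (Phi A)^[k] 1) := by
  rw [Function.iterate_succ_apply', Phi_sub']
  abel

open Filter in
lemma exists_lim_aux (n : ℕ) (hn : 2 ≤ n) (r : ℕ → ℕ) (d : ℕ)
    (hrec : ∀ k, r (k + 1) ≤ n * r k + d) :
    ∃ l : ℝ, Tendsto (fun k : ℕ => (r k : ℝ) / (n : ℝ) ^ k) atTop (nhds l) := by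
  have hn1 : (1 : ℝ) ≤ (n : ℝ) - 1 := by
    have : (2 : ℝ) ≤ n := by exact_mod_cast hn
    linarith
  have hnpos : (0 : ℝ) < n := by linarith
  set c : ℝ := d / ((n : ℝ) - 1) with hc_def
  have hc0 : 0 ≤ c := by positivity
  have hc : c * ((n : ℝ) - 1) = d := div_mul_cancel₀ _ (by linarith)
  set b : ℕ → ℝ := fun k => ((r k : ℝ) + c) / (n : ℝ) ^ k with hb_def
  have hanti : Antitone b := by
    apply antitone_nat_of_succ_le
    intro k
    have hp : (0 : ℝ) < (n : ℝ) ^ k := by positivity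
    rw [hb_def]
    simp only
    rw [div_le_div_iff₀ (by positivity) hp, pow_succ]
    have hrk : (r (k + 1) : ℝ) ≤ n * r k + d := by exact_mod_cast hrec k
    have hAB : (r (k + 1) : ℝ) + c ≤ ((r k : ℝ) + c) * n := by nlinarith
    calc ((r (k + 1) : ℝ) + c) * (n : ℝ) ^ k ≤ (((r k : ℝ) + c) * n) * (n : ℝ) ^ k :=
          mul_le_mul_of_nonneg_right hAB hp.le
      _ = ((r k : ℝ) + c) * ((n : ℝ) ^ k * n) := by ring
  have hbdd : BddBelow (Set.range b) := by
    refine ⟨0, ?_⟩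
    rintro x ⟨k, rfl⟩
    have : (0 : ℝ) ≤ ((r k : ℝ) + c) / (n : ℝ) ^ k := by positivity
    simpa [hb_def] using this
  have hbtend : Tendsto b atTop (nhds (⨅ k, b k)) := tendsto_atTop_ciInf hanti hbdd
  have hctend : Tendsto (fun k : ℕ => c * (1 / (n : ℝ)) ^ k) atTop (nhds 0) := by
    have h1n : |1 / (n : ℝ)| < 1 := by
      rw [abs_of_nonneg (by positivity)]
      rw [div_lt_one hnpos]
      linarith
    simpa using (tendsto_pow_atTop_nhds_zero_of_abs_lt_one h1n).const_mul c
  refine ⟨⨅ k, b k, ?_⟩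
  have heq : (fun k : ℕ => (r k : ℝ) / (n : ℝ) ^ k)
      = fun k => b k - c * (1 / (n : ℝ)) ^ k := by
    funext k
    have hp : ((n : ℝ) ^ k) ≠ 0 := by positivity
    rw [hb_def]
    field_simp
    rw [one_div, inv_pow, mul_assoc, mul_comm c, ← mul_assoc, mul_inv_cancel₀ hp, one_mul, add_sub_cancel_right]
  rw [heq]
  simpa using hbtend.sub hctend

end Aux

/-- For a row contraction (`n ≥ 2`) with `I − Φ(I)` of finite rank, the limit
`lim_k rank(I − Φ^k(I)) / n^k` exists. -/
theorem stmt8 {H : Type*} [NormedAddCommGroup H] [InnerProductSpace ℂ H] [CompleteSpace H]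
    {n : ℕ} (hn : 2 ≤ n) (A : Fin n → H →L[ℂ] H)
    (hA : (1 - Phi A 1).IsPositive)
    (hfr : FiniteDimensional ℂ (LinearMap.range ((1 - Phi A 1 : H →L[ℂ] H) : H →ₗ[ℂ] H))) :
    ∃ l : ℝ, Filter.Tendsto
      (fun k : ℕ => (Module.finrank ℂ (LinearMap.range ((1 - (Phi A)^[k] 1 : H →L[ℂ] H) : H →ₗ[ℂ] H)) : ℝ) / (n : ℝ) ^ k)
      Filter.atTop (nhds l) := by
  set r : ℕ → ℕ := fun k => Module.finrank ℂ (LinearMap.range ((1 - (Phi A)^[k] 1 : H →L[ℂ] H) : H →ₗ[ℂ] H)) with hr_def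
  set d : ℕ := Module.finrank ℂ (LinearMap.range ((1 - Phi A 1 : H →L[ℂ] H) : H →ₗ[ℂ] H)) with hd_def
  have step : ∀ k, FiniteDimensional ℂ (LinearMap.range ((1 - (Phi A)^[k] 1 : H →L[ℂ] H) : H →ₗ[ℂ] H)) →
      FiniteDimensional ℂ (LinearMap.range ((1 - (Phi A)^[k + 1] 1 : H →L[ℂ] H) : H →ₗ[ℂ] H)) ∧
        r (k + 1) ≤ n * r k + d := by
    intro k hk
    obtain ⟨hP, hPr⟩ := rank_Phi_le A _ hk
    obtain ⟨h1, h2⟩ := rank_add_le' _ _ hfr hP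
    rw [hr_def]
    simp only
    rw [key_decomp]
    exact ⟨h1, h2.trans (by omega)⟩
  have hFD : ∀ k, FiniteDimensional ℂ (LinearMap.range ((1 - (Phi A)^[k] 1 : H →L[ℂ] H) : H →ₗ[ℂ] H)) := by
    intro k
    induction k with
    | zero =>
        have h0 : (1 : H →L[ℂ] H) - (Phi A)^[0] 1 = 0 := by simp
        rw [h0]
        have : LinearMap.range ((0 : H →L[ℂ] H) : H →ₗ[ℂ] H) = ⊥ := LinearMap.range_eq_bot.2 rfl
        rw [this]
        infer_instance
    | succ k ih => exact (step k ih).1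
  exact exists_lim_aux n hn r d (fun k => (step k (hFD k)).2)
end
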